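/- Let A, B be integers, let Δ = A² − 4B, and let p be an odd prime with p ∤ B·Δ. Let ε = (Δ/p) ∈ {1, −1} be the Legendre symbol. Then in the ring ℤ[X]/(X² − A·X + B), the image α of X satisfies α^{p−ε} ≡ B^{(1−ε)/2} (mod p), i.e., α^{p−ε} − B^{(1−ε)/2} lies in the ideal generated by p. -/

import Mathlib

set_option maxHeartbeats 1000000
set_option synthInstance.maxHeartbeats 400000


open Polynomial in
theorem stmt14 (A B : ℤ) (p : ℕ) [Fact p.Prime] (hodd : Odd p)
    (hpB : ¬ ((p : ℤ) ∣ B * (A ^ 2 - 4 * B))) (ε : ℤ)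
    (hε : ε = legendreSym p (A ^ 2 - 4 * B)) :
    (Ideal.Quotient.mk (Ideal.span {X ^ 2 - C A * X + C B}) X) ^ ((p : ℤ) - ε).toNat -
      (B : Polynomial ℤ ⧸ Ideal.span {X ^ 2 - C A * X + C B}) ^ ((1 - ε) / 2).toNat ∈
      Ideal.span {((p : ℕ) : Polynomial ℤ ⧸ Ideal.span {X ^ 2 - C A * X + C B})} := by
  have hp : p.Prime := Fact.out
  have hpZ : Prime (p : ℤ) := Nat.prime_iff_prime_int.mp hp
  have hB : ¬ (p:ℤ) ∣ B := fun h => hpB (h.mul_right _)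
  have hΔ : ¬ (p:ℤ) ∣ (A^2 - 4*B) := fun h => hpB (h.mul_left _)
  have hpm : p % 2 = 1 := Nat.odd_iff.mp hodd
  have hppos : 1 ≤ p := hp.one_lt.le
  rw [← Ideal.Quotient.eq_zero_iff_mem, map_sub, map_pow, map_pow, map_intCast]
  set R := Polynomial ℤ ⧸ Ideal.span {X ^ 2 - C A * X + C B} with hR
  set S := R ⧸ Ideal.span {((p:ℕ) : R)} with hS
  letI : CommRing S := Ideal.Quotient.commRing _
  set φ : R →+* S := Ideal.Quotient.mk _ with hφ
  set a : S := φ (Ideal.Quotient.mk _ X) with ha_def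
  -- p = 0 in S
  have hp0 : ((p:ℕ) : S) = 0 := by
    have h := Ideal.Quotient.eq_zero_iff_mem.mpr
      (Ideal.subset_span (Set.mem_singleton (((p:ℕ) : R))))
    rwa [show Ideal.Quotient.mk (Ideal.span {((p:ℕ) : R)}) = φ from rfl, map_natCast] at h
  have hz : ∀ n : ℤ, (p:ℤ) ∣ n → (n : S) = 0 := by
    rintro n ⟨k, rfl⟩
    push_cast
    rw [hp0]; ring
  -- the quadratic relation
  have hquad : a^2 - (A:S)*a + (B:S) = 0 := by
    have h0 : Ideal.Quotient.mk (Ideal.span {X ^ 2 - C A * X + C B}) (X ^ 2 - C A * X + C B)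
        = 0 := Ideal.Quotient.eq_zero_iff_mem.mpr (Ideal.subset_span (Set.mem_singleton _))
    have h1 := congrArg φ h0
    simpa [ha_def, map_sub, map_add, map_pow, map_mul, Polynomial.C_eq_intCast,
      map_intCast] using h1
  -- B is invertible mod p
  obtain ⟨u, v, huv⟩ := hpZ.coprime_iff_not_dvd.mpr hB
  have hBv : (B:S) * (v:S) = 1 := by
    have h1 : ((u * p + v * B : ℤ) : S) = 1 := by rw [huv]; exact Int.cast_one
    push_cast at h1
    rw [hp0] at h1
    linear_combination h1
  -- 2 is invertible mod p
  have h2w : 2 * ((p+1)/2) = p + 1 := by omega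
  have h2w' : (2:S) * (((p+1)/2 : ℕ) : S) = 1 := by
    have h1 : ((2 * ((p+1)/2) : ℕ) : S) = ((p + 1 : ℕ) : S) := by rw [h2w]
    push_cast at h1
    rw [hp0] at h1
    linear_combination h1
  have cancel2 : ∀ c d : S, 2 * c = 2 * d → c = d := by
    intro c d h
    linear_combination ((((p+1)/2 : ℕ) : S)) * h - (c - d) * h2w'
  -- Fermat's little theorem, pushed to S
  have hfermat : ∀ n : ℤ, ((n:ℤ) : S)^p = ((n:ℤ) : S) := by
    intro n
    have hd : (p:ℤ) ∣ n^p - n := by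
      apply (ZMod.intCast_zmod_eq_zero_iff_dvd _ p).mp
      push_cast
      rw [ZMod.pow_card]
      ring
    have h1 := hz _ hd
    push_cast at h1
    linear_combination h1
  -- Euler's criterion, pushed to S
  have hEuler : (((A^2 - 4*B : ℤ)) : S)^(p/2) = ((ε : ℤ) : S) := by
    have hd : (p:ℤ) ∣ (A^2 - 4*B)^(p/2) - ε := by
      apply (ZMod.intCast_zmod_eq_zero_iff_dvd _ p).mp
      push_cast
      rw [hε, legendreSym.eq_pow]
      push_cast
      ring
    have h1 := hz _ hd
    push_cast at h1
    push_cast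
    linear_combination h1
  -- the discriminant identity
  have hDsq : (2*a - (A:S))^2 = ((A^2 - 4*B : ℤ) : S) := by
    push_cast
    linear_combination 4 * hquad
  -- odd power decomposition
  have hxp : ∀ x : S, x^p = (x^2)^(p/2) * x := by
    intro x
    rw [← pow_mul, ← pow_succ]
    congr 1
    omega
  -- Frobenius
  obtain ⟨r, hr⟩ := exists_add_pow_prime_eq hp (2*a) (-(A:S))
  have h2p : (2:S)^p = 2 := by
    have := hfermat 2; push_cast at this; exact this
  have hAp : ((A:S))^p = (A:S) := hfermat A
  have e2 : (2*a - (A:S))^p = 2*a^p - (A:S) := by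
    calc (2*a - (A:S))^p = (2*a + (-(A:S)))^p := by ring
    _ = (2*a)^p + (-(A:S))^p + p*(2*a)*(-(A:S))*r := hr
    _ = 2*a^p - (A:S) := by
        rw [mul_pow, h2p, hodd.neg_pow, hAp, hp0]
        try ring
  have e1 : (2*a - (A:S))^p = ((ε:ℤ):S) * (2*a - (A:S)) := by
    rw [hxp (2*a - (A:S)), hDsq, hEuler]
    try ring
  have key : 2*a^p - (A:S) = ((ε:ℤ):S) * (2*a - (A:S)) := by
    rw [← e2, e1]
  have hab : a * ((A:S) - a) = (B:S) := by linear_combination -hquad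
  -- case split on the value of the Legendre symbol
  have hε1 : ε = 1 ∨ ε = -1 := by
    rw [hε]
    refine legendreSym.eq_one_or_neg_one p ?_
    intro h
    exact hΔ ((ZMod.intCast_zmod_eq_zero_iff_dvd _ p).mp h)
  rcases hε1 with h1 | h1
  · subst h1
    have hap : a^p = a := by
      apply cancel2
      have : ((1:ℤ):S) = 1 := Int.cast_one
      linear_combination key + (2*a - (A:S)) * this
    have ht1 : ((p:ℤ) - 1).toNat = p - 1 := by omega
    have ht2 : ((1 - 1)/2 : ℤ).toNat = 0 := by norm_num
    simp only [ht1, ht2, pow_zero]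
    have hps : a^(p-1) * a = a^p := by
      rw [← pow_succ]
      congr 1
      omega
    have : a^(p-1) = 1 := by
      calc a^(p-1) = a^(p-1) * ((B:S) * (v:S)) := by rw [hBv, mul_one]
      _ = (a^(p-1) * a) * (((A:S) - a) * (v:S)) := by rw [← hab]; ring
      _ = a^p * (((A:S) - a) * (v:S)) := by rw [hps]
      _ = (a * ((A:S) - a)) * (v:S) := by rw [hap]; ring
      _ = (B:S) * (v:S) := by rw [hab]
      _ = 1 := hBv
    rw [this, sub_self]
  · subst h1
    have hap : a^p = (A:S) - a := by
      apply cancel2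
      have : ((-1:ℤ):S) = -1 := by push_cast; ring
      linear_combination key + (2*a - (A:S)) * this
    have ht1 : ((p:ℤ) - (-1)).toNat = p + 1 := by omega
    have ht2 : ((1 - (-1))/2 : ℤ).toNat = 1 := by norm_num
    simp only [ht1, ht2, pow_one, pow_succ, hap, sub_eq_zero]
    linear_combination -hquad
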